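/- Every abelian group embeds into a divisible abelian group of which it is an essential subgroup. -/

import Mathlib

open Function

theorem add_stmt (A : Type) [AddCommGroup A] :
    ∃ (H : Type) (_ : AddCommGroup H) (f : A →+ H),
      Function.Injective f ∧
      (∀ n : ℕ, n ≠ 0 → ∀ h : H, ∃ x : H, n • x = h) ∧
      (∀ K : AddSubgroup H, K ≠ ⊥ → f.range ⊓ K ≠ ⊥) := by
  classical
  -- D : a divisible group containing A
  set D := (CharacterModule A) → AddCircle (1 : ℚ) with hD
  let ι : A →+ D := { toFun := fun a c => c a,
                      map_zero' := by funext c; show c 0 = 0; simp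
                      map_add' := by intro a b; funext c; show c (a+b) = c a + c b; simp }
  have hι : Function.Injective ι := by
    rw [injective_iff_map_eq_zero]
    intro a h0
    exact CharacterModule.eq_zero_of_character_apply (fun c => congr_fun h0 c)
  have hDdiv : ∀ n : ℕ, n ≠ 0 → ∀ d : D, ∃ x : D, n • x = d := by
    intro n hn d
    refine ⟨DivisibleBy.div d (n : ℤ), ?_⟩
    have := DivisibleBy.div_cancel d (by exact_mod_cast hn : (n : ℤ) ≠ 0)
    rw [← natCast_zsmul]
    exact this
  -- Zorn: maximal subgroup C with C ⊓ ι.range = ⊥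
  obtain ⟨C, -, hCmem, hCmax⟩ := zorn_le_nonempty₀
    {C : AddSubgroup D | C ⊓ ι.range = ⊥}
    (fun c hcS hchain y hy => by
      refine ⟨sSup c, ?_, fun z hz => le_sSup hz⟩
      show sSup c ⊓ ι.range = ⊥
      rw [AddSubgroup.eq_bot_iff_forall]
      intro x hx
      rw [AddSubgroup.mem_inf] at hx
      obtain ⟨hx1, hx2⟩ := hx
      rw [AddSubgroup.mem_sSup_of_directedOn ⟨y, hy⟩ hchain.directedOn] at hx1
      obtain ⟨s, hs, hxs⟩ := hx1
      have : x ∈ s ⊓ ι.range := ⟨hxs, hx2⟩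
      rw [hcS hs] at this
      exact this)
    ⊥ (by simp)
  refine ⟨D ⧸ C, inferInstance, (QuotientAddGroup.mk' C).comp ι, ?_, ?_, ?_⟩
  · rw [injective_iff_map_eq_zero]
    intro a ha
    have : ι a ∈ C := by
      rwa [← QuotientAddGroup.ker_mk' C, AddMonoidHom.mem_ker]
    have : ι a ∈ C ⊓ ι.range := ⟨this, ⟨a, rfl⟩⟩
    rw [hCmem] at this
    exact hι (by simpa using this)
  · intro n hn h
    induction h using QuotientAddGroup.induction_on with
    | H d =>
      obtain ⟨x, hx⟩ := hDdiv n hn d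
      exact ⟨QuotientAddGroup.mk' C x, by rw [← map_nsmul, hx]; rfl⟩
  · intro K hK
    set π := QuotientAddGroup.mk' C
    have hXC : C ≤ K.comap π := by
      intro x hx
      simp only [AddSubgroup.mem_comap]
      have : π x = 0 := by rwa [← QuotientAddGroup.ker_mk' C, AddMonoidHom.mem_ker] at hx
      rw [this]; exact K.zero_mem
    have hXne : K.comap π ⊓ ι.range ≠ ⊥ := by
      intro hbot
      have : K.comap π ≤ C := hCmax hbot hXC
      apply hK
      have hsurj : Function.Surjective π := QuotientAddGroup.mk'_surjective C
      rw [AddSubgroup.eq_bot_iff_forall]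
      intro k hk
      obtain ⟨x, rfl⟩ := hsurj k
      have : x ∈ C := this hk
      rwa [← QuotientAddGroup.ker_mk' C, AddMonoidHom.mem_ker] at this
    rw [Ne, AddSubgroup.eq_bot_iff_forall] at hXne
    push_neg at hXne
    obtain ⟨x, ⟨hxK, a, rfl⟩, hxne⟩ := hXne
    rw [Ne, AddSubgroup.eq_bot_iff_forall]
    push_neg
    refine ⟨π (ι a), ⟨⟨a, rfl⟩, hxK⟩, ?_⟩
    intro h0
    have : ι a ∈ C := by
      rw [← QuotientAddGroup.ker_mk' C, AddMonoidHom.mem_ker]; exact h0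
    have : ι a ∈ C ⊓ ι.range := ⟨this, ⟨a, rfl⟩⟩
    rw [hCmem] at this
    exact hxne (by simpa using this)

/-- Every abelian group embeds into a divisible abelian group of which
it is an essential subgroup. -/
theorem stmt_1 (G : Type) [CommGroup G] :
    ∃ (H : Type) (_ : CommGroup H) (f : G →* H),
      Function.Injective f ∧
      (∀ n : ℕ, n ≠ 0 → ∀ h : H, ∃ x : H, x ^ n = h) ∧
      (∀ K : Subgroup H, K ≠ ⊥ → f.range ⊓ K ≠ ⊥) := by
  obtain ⟨Ha, instHa, fa, hfa_inj, hfa_div, hfa_ess⟩ := add_stmt (Additive G)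
  refine ⟨Multiplicative Ha, inferInstance,
    { toFun := fun g => Multiplicative.ofAdd (fa (Additive.ofMul g))
      map_one' := by simp
      map_mul' := by intro a b; simp [ofAdd_add] }, ?_, ?_, ?_⟩
  · intro a b hab
    simpa using hfa_inj (a₁ := Additive.ofMul a) (a₂ := Additive.ofMul b) (by simpa using hab)
  · intro n hn h
    obtain ⟨x, hx⟩ := hfa_div n hn h.toAdd
    exact ⟨Multiplicative.ofAdd x, by rw [← ofAdd_nsmul, hx]; rfl⟩
  · intro K hK
    set f : G →* Multiplicative Ha :=
      { toFun := fun g => Multiplicative.ofAdd (fa (Additive.ofMul g))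
        map_one' := by simp
        map_mul' := by intro a b; simp [ofAdd_add] }
    set K' : AddSubgroup Ha := Subgroup.toAddSubgroup' K with hK'
    have hK'ne : K' ≠ ⊥ := by
      intro h
      apply hK
      have := congrArg (AddSubgroup.toSubgroup (A := Ha)) h
      simpa [hK'] using this
    have := hfa_ess K' hK'ne
    rw [Ne, AddSubgroup.eq_bot_iff_forall] at this
    push_neg at this
    obtain ⟨x, ⟨⟨a, rfl⟩, hxK⟩, hxne⟩ := this
    rw [Ne, Subgroup.eq_bot_iff_forall]
    push_neg
    refine ⟨Multiplicative.ofAdd (fa a), ⟨⟨Additive.toMul a, ?_⟩, ?_⟩, ?_⟩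
    · simp [f]
    · exact hxK
    · simpa using hxne
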